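/- Let R = ℤ⟨A,D⟩ be the free noncommutative polynomial ring on two variables A, D, graded with deg A = deg D = 1, and set c = A + D and d = AD + DA. Then the family of all cd-monomials (noncommutative words in c and d, where d contributes degree 2) is linearly independent in R; i.e., the subring generated by c and d is free on c and d. -/

import Mathlib

noncomputable section

/-- The free associative `ℤ`-algebra `ℤ⟨A,D⟩` on two noncommuting variables,
modeled as the monoid algebra of the free monoid on `Bool`
(`false` ↦ `A`, `true` ↦ `D`). -/
abbrev R : Type := MonoidAlgebra ℤ (FreeMonoid Bool)

def A : R := MonoidAlgebra.single (FreeMonoid.of false) 1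
def D : R := MonoidAlgebra.single (FreeMonoid.of true) 1
def c : R := A + D
def d : R := A * D + D * A

/-- The cd-monomial corresponding to a word in `{c, d}` (`false` ↦ `c`, `true` ↦ `d`). -/
def cdMon (l : List Bool) : R := (l.map (fun b => if b then d else c)).prod

namespace CD

def bit (b : Bool) : ℕ := if b then 1 else 0
def step : ℕ → Bool → ℕ := fun n b => 2 * n + bit b
def nu (w : List Bool) : ℕ := w.foldl step 1
def rv (w : List Bool) : ℕ := w.foldl step 0
def blk (b : Bool) : List Bool := if b then [true, false] else [true]
def obk (b : Bool) : List Bool := if b then [false, true] else [false]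
def phi : List Bool → List Bool
  | [] => []
  | b :: t => blk b ++ phi t

open FreeMonoid

lemma foldl_eq (w : List Bool) (m : ℕ) :
    w.foldl step m = m * 2 ^ w.length + rv w := by
  induction w generalizing m with
  | nil => simp [rv]
  | cons b t ih =>
    simp only [List.foldl_cons, List.length_cons, rv] at *
    rw [ih, ih (step 0 b)]
    simp only [step, bit]
    cases b <;> ring

lemma rv_lt (w : List Bool) : rv w < 2 ^ w.length := by
  induction w with
  | nil => simp [rv]
  | cons b t ih =>
    show (b :: t).foldl step 0 < _
    rw [List.foldl_cons, foldl_eq, List.length_cons, pow_succ]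
    have hb : step 0 b ≤ 1 := by cases b <;> simp [step, bit]
    have h2 : step 0 b * 2 ^ t.length ≤ 1 * 2 ^ t.length :=
      Nat.mul_le_mul_right _ hb
    have h3 : (0:ℕ) < 2 ^ t.length := Nat.pow_pos (by norm_num)
    omega

lemma nu_eq (w : List Bool) : nu w = 2 ^ w.length + rv w := by
  rw [nu, foldl_eq, one_mul]

lemma nu_append (u v : List Bool) :
    nu (u ++ v) = nu u * 2 ^ v.length + rv v := by
  rw [nu, List.foldl_append, foldl_eq]; rfl

lemma nu_cons (b : Bool) (t : List Bool) :
    nu (b :: t) = step 1 b * 2 ^ t.length + rv t := by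
  rw [nu, List.foldl_cons, foldl_eq]

lemma nu_lt (w : List Bool) : nu w < 2 ^ (w.length + 1) := by
  rw [nu_eq, pow_succ]
  have := rv_lt w
  omega

lemma nu_length {w w' : List Bool} (h : nu w = nu w') : w.length = w'.length := by
  by_contra hne
  rcases Nat.lt_or_ge w.length w'.length with hlt | hge
  · have h1 := nu_lt w
    have h2 : 2 ^ w'.length ≤ nu w' := by rw [nu_eq]; omega
    have : (2:ℕ) ^ (w.length + 1) ≤ 2 ^ w'.length := Nat.pow_le_pow_right (by norm_num) hlt
    omega
  · have hlt : w'.length < w.length := lt_of_le_of_ne hge (Ne.symm (by omega))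
    have h1 := nu_lt w'
    have h2 : 2 ^ w.length ≤ nu w := by rw [nu_eq]; omega
    have : (2:ℕ) ^ (w'.length + 1) ≤ 2 ^ w.length := Nat.pow_le_pow_right (by norm_num) hlt
    omega

lemma nu_inj : Function.Injective nu := by
  intro w w' h
  induction w generalizing w' with
  | nil =>
    cases w' with
    | nil => rfl
    | cons b t => exact absurd (nu_length h) (by simp)
  | cons b t ih =>
    cases w' with
    | nil => exact absurd (nu_length h) (by simp)
    | cons b' t' =>
      have hlen : t.length = t'.length := by have := nu_length h; simpa using this
      rw [nu_cons, nu_cons, ← hlen] at h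
      have h1 := rv_lt t
      have h2 := rv_lt t'
      rw [← hlen] at h2
      have hbb : b = b' ∧ rv t = rv t' := by
        cases b <;> cases b' <;> simp [step, bit] at h ⊢ <;> omega
      have : t = t' := ih (by rw [nu_eq, nu_eq, hbb.2, hlen])
      rw [hbb.1, this]


lemma phi_head : ∀ l : List Bool, phi l = [] ∨ ∃ s, phi l = true :: s := by
  intro l
  cases l with
  | nil => left; rfl
  | cons b t => right; cases b <;> exact ⟨_, rfl⟩

lemma phi_inj : Function.Injective phi := by
  intro l l' h
  induction l generalizing l' with
  | nil =>
    cases l' with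
    | nil => rfl
    | cons b t =>
      exfalso
      have : phi (b :: t) = [] := h.symm
      cases b <;> simp [phi, blk] at this
  | cons b t ih =>
    cases l' with
    | nil =>
      exfalso
      have : phi (b :: t) = [] := h
      cases b <;> simp [phi, blk] at this
    | cons b' t' =>
      cases b <;> cases b' <;> simp [phi, blk] at h
      · rw [ih h]
      · exfalso
        rcases phi_head t with h0 | ⟨s, hs⟩ <;> simp_all
      · exfalso
        rcases phi_head t' with h0 | ⟨s, hs⟩ <;> simp_all
      · rw [ih h]



lemma cdMon_cons (b : Bool) (t : List Bool) :
    cdMon (b :: t) = (if b then d else c) * cdMon t := by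
  simp [cdMon]

lemma E_eq (b : Bool) :
    (if b then d else c) =
      MonoidAlgebra.single (ofList (blk b)) 1 + MonoidAlgebra.single (ofList (obk b)) 1 := by
  cases b
  · show c = _
    rw [c, A, D, add_comm]
    rfl
  · show d = _
    rw [d, A, D, MonoidAlgebra.single_mul_single, MonoidAlgebra.single_mul_single,
      add_comm, one_mul]
    rfl

lemma H_cancel (x z : FreeMonoid Bool) : ∀ a, x * a = x * z ↔ a = z := by
  intro a
  constructor
  · exact fun h => mul_left_cancel h
  · rintro rfl; rfl

lemma coeff_ne_support {x : R} {w : FreeMonoid Bool} (h : x.coeff w ≠ 0) : w ∈ x.coeff.support :=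
  Finsupp.mem_support_iff.2 h

lemma key (l : List Bool) :
    (cdMon l).coeff (ofList (phi l)) = 1 ∧
    ∀ w : FreeMonoid Bool, (cdMon l).coeff w ≠ 0 →
      (toList w).length = (phi l).length ∧ nu (toList w) ≤ nu (phi l) := by
  classical
  induction l with
  | nil =>
    constructor
    · show (1 : R).coeff (ofList []) = 1
      rw [MonoidAlgebra.one_def, MonoidAlgebra.coeff_single]
      exact Finsupp.single_eq_same
    · intro w hw
      have h1 : (1 : R).coeff w ≠ 0 := hw
      rw [MonoidAlgebra.one_def, MonoidAlgebra.coeff_single, Finsupp.single_apply] at h1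
      have : (1 : FreeMonoid Bool) = w := by
        by_contra hne
        simp [hne] at h1
      subst this
      exact ⟨rfl, le_refl _⟩
  | cons b t ih =>
    have hphi : ofList (phi (b :: t)) = ofList (blk b) * ofList (phi t) := by
      show ofList (blk b ++ phi t) = _
      exact ofList_append _ _
    constructor
    · rw [cdMon_cons, E_eq, add_mul, MonoidAlgebra.coeff_add, Finsupp.add_apply]
      have h1 : ((MonoidAlgebra.single (ofList (blk b)) 1 * cdMon t : R)).coeff (ofList (phi (b :: t)))
          = 1 * (cdMon t).coeff (ofList (phi t)) := by
        rw [hphi]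
        exact MonoidAlgebra.coeff_single_mul_eq_mul_coeff _ (fun a _ => H_cancel _ _ a)
      have h2 : ((MonoidAlgebra.single (ofList (obk b)) 1 * cdMon t : R)).coeff (ofList (phi (b :: t)))
          = 0 := by
        by_contra hne
        have hmem := MonoidAlgebra.support_coeff_single_mul_subset (cdMon t) 1 (ofList (obk b))
          (coeff_ne_support hne)
        rw [Finset.mem_image] at hmem
        obtain ⟨v, _, hv⟩ := hmem
        have : obk b ++ toList v = blk b ++ phi t := by
          have := congrArg toList hv
          simpa [toList_mul, phi] using this
        cases b <;> simp [obk, blk] at this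
      rw [h1, h2, ih.1, add_zero, one_mul]
    · intro w hw
      rw [cdMon_cons, E_eq, add_mul, MonoidAlgebra.coeff_add, Finsupp.add_apply] at hw
      have hor : ((MonoidAlgebra.single (ofList (blk b)) 1 * cdMon t : R)).coeff w ≠ 0 ∨
          ((MonoidAlgebra.single (ofList (obk b)) 1 * cdMon t : R)).coeff w ≠ 0 := by
        by_contra hc
        push_neg at hc
        rw [hc.1, hc.2] at hw
        exact hw (add_zero 0)
      have main : ∀ u : List Bool, u.length = (blk b).length → nu u ≤ nu (blk b) →
          ((MonoidAlgebra.single (ofList u) 1 * cdMon t : R)).coeff w ≠ 0 →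
          (toList w).length = (phi (b :: t)).length ∧ nu (toList w) ≤ nu (phi (b :: t)) := by
        intro u hulen hunu hne
        have hmem := MonoidAlgebra.support_coeff_single_mul_subset (cdMon t) 1 (ofList u)
          (coeff_ne_support hne)
        rw [Finset.mem_image] at hmem
        obtain ⟨v, hvmem, hv⟩ := hmem
        have hvne : (cdMon t).coeff v ≠ 0 := Finsupp.mem_support_iff.1 hvmem
        obtain ⟨hlen, hnu⟩ := ih.2 v hvne
        have hwl : toList w = u ++ toList v := by
          have := congrArg toList hv
          simpa [toList_mul] using this.symm
        have hphil : phi (b :: t) = blk b ++ phi t := rfl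
        constructor
        · rw [hwl, hphil, List.length_append, List.length_append, hlen, hulen]
        · rw [hwl, hphil, nu_append, nu_append]
          have hrv : rv (toList v) ≤ rv (phi t) := by
            have e1 := nu_eq (toList v)
            have e2 := nu_eq (phi t)
            rw [hlen] at e1
            omega
          have hmul : nu u * 2 ^ (toList v).length ≤ nu (blk b) * 2 ^ (phi t).length := by
            rw [hlen]
            exact Nat.mul_le_mul_right _ hunu
          omega
      rcases hor with h | h
      · exact main (blk b) rfl (le_refl _) h
      · refine main (obk b) ?_ ?_ h <;> cases b <;> decide

end CD

open CD FreeMonoid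

/-- The family of all cd-monomials is linearly independent over `ℤ`;
i.e. the subring generated by `c` and `d` is free on `c` and `d`. -/
theorem cdMonomials_linearIndependent : LinearIndependent ℤ cdMon := by
  rw [linearIndependent_iff']
  intro s g hsum i his
  by_contra hgi
  classical
  set T : Finset (List Bool) := s.filter (fun i => g i ≠ 0) with hT
  have hTsum : ∑ j ∈ T, g j • cdMon j = 0 := by
    rw [hT, Finset.sum_filter_of_ne, hsum]
    intro x _ hx hgx
    exact hx (by rw [hgx, zero_smul])
  have hTne : T.Nonempty := ⟨i, Finset.mem_filter.2 ⟨his, hgi⟩⟩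
  obtain ⟨l, hlT, hlmax⟩ := T.exists_max_image (fun j => nu (phi j)) hTne
  have hgl : g l ≠ 0 := (Finset.mem_filter.1 hlT).2
  have heval : (∑ j ∈ T, g j • cdMon j).coeff (ofList (phi l)) = g l := by
    rw [MonoidAlgebra.coeff_sum, Finsupp.finset_sum_apply]
    rw [Finset.sum_eq_single_of_mem l hlT]
    · rw [MonoidAlgebra.coeff_smul, Finsupp.smul_apply, (key l).1, smul_eq_mul, mul_one]
    · intro j hjT hjl
      have hcoeff : (cdMon j).coeff (ofList (phi l)) = 0 := by
        by_contra hne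
        have h2 := ((key j).2 (ofList (phi l)) hne).2
        have h3 : nu (toList (ofList (phi l))) = nu (phi l) := rfl
        rw [h3] at h2
        have h4 := hlmax j hjT
        have : phi j = phi l := nu_inj (le_antisymm h4 h2)
        exact hjl (phi_inj this)
      rw [MonoidAlgebra.coeff_smul, Finsupp.smul_apply, hcoeff, smul_zero]
  rw [hTsum] at heval
  exact hgl (by simpa using heval.symm)
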